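/- Let R ≥ 0, θ₀, z₀ ∈ ℝ, Θ₀ = (cos θ₀, sin θ₀), and let x = (x′, z) ∈ ℝ² × ℝ with |x′| < 1. Define Ψ(x′, z) = (|x′ − Θ₀| + R)² + (z − z₀)². Then Ψ is differentiable at x, and its gradient ∇Ψ(x) = (2(g+R)(x′ − Θ₀)/g, 2(z − z₀)) with g = |x′ − Θ₀| is not parallel to (0, 0, 1); that is, the normal direction to any lemon through a point of the open unit cylinder is never parallel to the cylinder axis. -/

import Mathlib

open Real

/-- The normal direction to any lemon through a point of the open unit cylinder is never
parallel to the cylinder axis: the defining function `Ψ` is differentiable, its gradient is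
given by the stated formula, and that gradient is not a multiple of `(0,0,1)`. -/
theorem lemon_normal_never_axial
    (R θ₀ z₀ : ℝ) (hR : 0 ≤ R) (a b c : ℝ)
    (hab : Real.sqrt (a ^ 2 + b ^ 2) < 1)
    (g : ℝ) (hg : g = Real.sqrt ((a - Real.cos θ₀) ^ 2 + (b - Real.sin θ₀) ^ 2)) :
    DifferentiableAt ℝ
      (fun q : ℝ × ℝ × ℝ =>
        (Real.sqrt ((q.1 - Real.cos θ₀) ^ 2 + (q.2.1 - Real.sin θ₀) ^ 2) + R) ^ 2 +
          (q.2.2 - z₀) ^ 2) (a, b, c) ∧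
    (∀ v : ℝ × ℝ × ℝ,
      fderiv ℝ
        (fun q : ℝ × ℝ × ℝ =>
          (Real.sqrt ((q.1 - Real.cos θ₀) ^ 2 + (q.2.1 - Real.sin θ₀) ^ 2) + R) ^ 2 +
            (q.2.2 - z₀) ^ 2) (a, b, c) v =
        2 * (g + R) * (a - Real.cos θ₀) / g * v.1 +
          2 * (g + R) * (b - Real.sin θ₀) / g * v.2.1 + 2 * (c - z₀) * v.2.2) ∧
    (∀ t : ℝ,
      ((2 * (g + R) * (a - Real.cos θ₀) / g, 2 * (g + R) * (b - Real.sin θ₀) / g,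
          2 * (c - z₀)) : ℝ × ℝ × ℝ) ≠ t • ((0, 0, 1) : ℝ × ℝ × ℝ)) := by
  have hne : ¬(a - Real.cos θ₀ = 0 ∧ b - Real.sin θ₀ = 0) := by
    rintro ⟨h1, h2⟩
    have ha : a = Real.cos θ₀ := by linarith
    have hb : b = Real.sin θ₀ := by linarith
    rw [ha, hb, Real.cos_sq_add_sin_sq, Real.sqrt_one] at hab
    exact lt_irrefl 1 hab
  have hSpos : 0 < (a - Real.cos θ₀) ^ 2 + (b - Real.sin θ₀) ^ 2 := by
    rcases lt_or_eq_of_le (by positivity :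
        (0:ℝ) ≤ (a - Real.cos θ₀) ^ 2 + (b - Real.sin θ₀) ^ 2) with h | h
    · exact h
    · exact absurd ⟨by nlinarith [sq_nonneg (a - Real.cos θ₀), sq_nonneg (b - Real.sin θ₀)],
        by nlinarith [sq_nonneg (a - Real.cos θ₀), sq_nonneg (b - Real.sin θ₀)]⟩ hne
  have hgpos : 0 < g := by rw [hg]; exact Real.sqrt_pos.mpr hSpos
  have hgne : g ≠ 0 := ne_of_gt hgpos
  have hthird : ∀ t : ℝ,
      ((2 * (g + R) * (a - Real.cos θ₀) / g, 2 * (g + R) * (b - Real.sin θ₀) / g,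
          2 * (c - z₀)) : ℝ × ℝ × ℝ) ≠ t • ((0, 0, 1) : ℝ × ℝ × ℝ) := by
    intro t hEq
    have e1 := congrArg Prod.fst hEq
    have e2 := congrArg (fun q : ℝ × ℝ × ℝ => q.2.1) hEq
    simp only [Prod.smul_fst, Prod.smul_snd, smul_eq_mul, mul_zero] at e1 e2
    apply hne
    have hgR : 0 < g + R := by linarith
    constructor
    · rcases div_eq_zero_iff.mp e1 with h | h
      · nlinarith
      · exact absurd h hgne
    · rcases div_eq_zero_iff.mp e2 with h | h
      · nlinarith
      · exact absurd h hgne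
  set P1 : ℝ × ℝ × ℝ →L[ℝ] ℝ := ContinuousLinearMap.fst ℝ ℝ (ℝ × ℝ) with hP1
  set P2 : ℝ × ℝ × ℝ →L[ℝ] ℝ :=
    (ContinuousLinearMap.fst ℝ ℝ ℝ).comp (ContinuousLinearMap.snd ℝ ℝ (ℝ × ℝ)) with hP2
  set P3 : ℝ × ℝ × ℝ →L[ℝ] ℝ :=
    (ContinuousLinearMap.snd ℝ ℝ ℝ).comp (ContinuousLinearMap.snd ℝ ℝ (ℝ × ℝ)) with hP3
  have h1 : HasFDerivAt (fun q : ℝ × ℝ × ℝ => q.1) P1 (a, b, c) := hasFDerivAt_fst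
  have h2 : HasFDerivAt (fun q : ℝ × ℝ × ℝ => q.2.1) P2 (a, b, c) :=
    hasFDerivAt_fst.comp _ hasFDerivAt_snd
  have h3 : HasFDerivAt (fun q : ℝ × ℝ × ℝ => q.2.2) P3 (a, b, c) :=
    hasFDerivAt_snd.comp _ hasFDerivAt_snd
  have hsq1 : HasFDerivAt (fun q : ℝ × ℝ × ℝ => (q.1 - Real.cos θ₀) ^ 2)
      ((2 * (a - Real.cos θ₀)) • P1) (a, b, c) := by
    have := (hasDerivAt_pow 2 (a - Real.cos θ₀)).comp_hasFDerivAt (a, b, c)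
      (h1.sub_const (Real.cos θ₀))
    simpa [Function.comp_def] using this
  have hsq2 : HasFDerivAt (fun q : ℝ × ℝ × ℝ => (q.2.1 - Real.sin θ₀) ^ 2)
      ((2 * (b - Real.sin θ₀)) • P2) (a, b, c) := by
    have := (hasDerivAt_pow 2 (b - Real.sin θ₀)).comp_hasFDerivAt (a, b, c)
      (h2.sub_const (Real.sin θ₀))
    simpa [Function.comp_def] using this
  have hsq3 : HasFDerivAt (fun q : ℝ × ℝ × ℝ => (q.2.2 - z₀) ^ 2)
      ((2 * (c - z₀)) • P3) (a, b, c) := by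
    have := (hasDerivAt_pow 2 (c - z₀)).comp_hasFDerivAt (a, b, c) (h3.sub_const z₀)
    simpa [Function.comp_def] using this
  have hh : HasFDerivAt
      (fun q : ℝ × ℝ × ℝ => (q.1 - Real.cos θ₀) ^ 2 + (q.2.1 - Real.sin θ₀) ^ 2)
      ((2 * (a - Real.cos θ₀)) • P1 + (2 * (b - Real.sin θ₀)) • P2) (a, b, c) :=
    hsq1.add hsq2
  have hsqrt : HasFDerivAt
      (fun q : ℝ × ℝ × ℝ =>
        Real.sqrt ((q.1 - Real.cos θ₀) ^ 2 + (q.2.1 - Real.sin θ₀) ^ 2))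
      ((1 / (2 * g)) • ((2 * (a - Real.cos θ₀)) • P1 + (2 * (b - Real.sin θ₀)) • P2))
      (a, b, c) := by
    have := hh.sqrt (x := (a, b, c)) (ne_of_gt hSpos)
    simpa [← hg] using this
  have houter : HasFDerivAt
      (fun q : ℝ × ℝ × ℝ =>
        (Real.sqrt ((q.1 - Real.cos θ₀) ^ 2 + (q.2.1 - Real.sin θ₀) ^ 2) + R) ^ 2)
      ((2 * (g + R)) • ((1 / (2 * g)) • ((2 * (a - Real.cos θ₀)) • P1 +
        (2 * (b - Real.sin θ₀)) • P2))) (a, b, c) := by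
    have := (hasDerivAt_pow 2
        (Real.sqrt ((a - Real.cos θ₀) ^ 2 + (b - Real.sin θ₀) ^ 2) + R)).comp_hasFDerivAt
        (a, b, c) (hsqrt.add_const R)
    simpa [← hg, Function.comp_def] using this
  have hbig := houter.add hsq3
  refine ⟨hbig.differentiableAt, ?_, hthird⟩
  · intro v
    erw [hbig.fderiv]
    simp only [ContinuousLinearMap.add_apply, ContinuousLinearMap.smul_apply,
      ContinuousLinearMap.coe_comp', Function.comp_apply, ContinuousLinearMap.coe_fst',
      ContinuousLinearMap.coe_snd', hP1, hP2, hP3, smul_eq_mul]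
    field_simp
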